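/- Let $R = \Bbbk[u_{ij}^{(k)} : 1 \le i,j \le n, k \ge 0]$ be a polynomial ring over a field $\Bbbk$, and define $f^{(k)} \in R$ by the expansion $\prod_{i=1}^n \left(\sum_{k\ge 0} u_{ii}^{(k)} s^k\right) - 1 = \sum_{k\ge 0} f^{(k)} s^k$ in $R[[s]]$. Then the sequence $f^{(0)}, f^{(1)}, f^{(2)}, \dots$ is a regular sequence in $R$. -/

import Mathlib

open MvPolynomial PowerSeries Finset

namespace Stmt6

lemma coeff_prod_fin {n : ℕ} {R : Type*} [CommSemiring R] (F : Fin n → PowerSeries R) (j : ℕ) :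
    PowerSeries.coeff j (∏ i, F i) =
      ∑ d ∈ Finset.Nat.antidiagonalTuple n j, ∏ i, PowerSeries.coeff (d i) (F i) := by
  rw [PowerSeries.coeff_prod]
  refine Finset.sum_nbij' (fun l => (l : Fin n → ℕ))
    (fun d => Finsupp.equivFunOnFinite.symm d) ?_ ?_ ?_ ?_ ?_
  · intro l hl
    rw [Finset.mem_finsuppAntidiag] at hl
    rw [Finset.Nat.mem_antidiagonalTuple]
    exact hl.1
  · intro d hd
    rw [Finset.Nat.mem_antidiagonalTuple] at hd
    rw [Finset.mem_finsuppAntidiag]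
    refine ⟨?_, Finset.subset_univ _⟩
    simpa using hd
  · intro l _; exact Finsupp.equivFunOnFinite.symm_apply_apply l
  · intro d _; rfl
  · intro l _; rfl

variable (K : Type*) [Field K] (n : ℕ)

/-- the polynomials f^(k) -/
noncomputable def fp (k : ℕ) : MvPolynomial (Fin n × Fin n × ℕ) K :=
  (∑ c ∈ Finset.Nat.antidiagonalTuple n k,
      ∏ i : Fin n, X (i, i, c i)) - (if k = 0 then 1 else 0)

/-- the generating series of the variables u_ii -/
noncomputable def Aser (i : Fin n) : PowerSeries (MvPolynomial (Fin n × Fin n × ℕ) K) :=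
  PowerSeries.mk fun m => X (i, i, m)

lemma fp_eq (k : ℕ) :
    fp K n k = PowerSeries.coeff k (∏ i, Aser K n i) - (if k = 0 then 1 else 0) := by
  rw [coeff_prod_fin]
  simp [fp, Aser]

set_option maxHeartbeats 2000000 in
theorem aux (hn : 0 < n) (k : ℕ) (hk : 0 < k) (a : MvPolynomial (Fin n × Fin n × ℕ) K)
    (ha : fp K n k * a ∈ Ideal.span (fp K n '' {j | j < k})) :
    a ∈ Ideal.span (fp K n '' {j | j < k}) := by
  classical
  set Ik := Ideal.span (fp K n '' {j | j < k}) with hIkdef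
  set ℓ : Fin n := ⟨0, hn⟩ with hℓdef
  set c : MvPolynomial (Fin n × Fin n × ℕ) K := ∏ i ∈ univ.erase ℓ, X (i, i, (0:ℕ)) with hcdef
  have hc0 : c ≠ 0 :=
    Finset.prod_ne_zero_iff.mpr fun i _ => X_ne_zero _
  have hcnzd := powers_le_nonZeroDivisors_of_noZeroDivisors hc0
  haveI : IsDomain (Localization.Away c) := IsLocalization.isDomain_localization hcnzd
  set φ : MvPolynomial (Fin n × Fin n × ℕ) K →+* Localization.Away c :=
    algebraMap _ _ with hφdef
  have hφinj : Function.Injective φ := IsLocalization.injective _ hcnzd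
  have hUc : IsUnit (φ c) := IsLocalization.Away.algebraMap_isUnit c
  set P : PowerSeries (Localization.Away c) :=
    ∏ i ∈ univ.erase ℓ, (Aser K n i).map φ with hPdef
  have hP0 : PowerSeries.constantCoeff P = φ c := by
    have h1 : PowerSeries.constantCoeff P
        = ∏ i ∈ univ.erase ℓ, PowerSeries.constantCoeff ((Aser K n i).map φ) :=
      map_prod _ _ _
    have h2 : φ c = ∏ i ∈ univ.erase ℓ, φ (MvPolynomial.X (i, i, (0:ℕ))) := map_prod φ _ _
    rw [h1, h2]
    refine Finset.prod_congr rfl fun i _ => ?_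
    rw [← PowerSeries.coeff_zero_eq_constantCoeff_apply, PowerSeries.coeff_map]
    simp [Aser]
  set B := PowerSeries.invOfUnit P hUc.unit with hBdef
  have hPB : P * B = 1 :=
    PowerSeries.mul_invOfUnit P hUc.unit (by rw [hP0, IsUnit.unit_spec])
  clear hBdef
  clear_value B
  set v : Fin n × Fin n × ℕ → Localization.Away c := fun s =>
    if s.1 = ℓ ∧ s.2.1 = ℓ ∧ s.2.2 < k then PowerSeries.coeff s.2.2 B else φ (MvPolynomial.X s)
    with hvdef
  set ψ : MvPolynomial (Fin n × Fin n × ℕ) K →+* Localization.Away c :=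
    eval₂Hom (φ.comp C) v with hψdef
  have hψX : ∀ s, ψ (MvPolynomial.X s) = v s := fun s => eval₂Hom_X' _ _ _
  set E := PowerSeries.mk (fun m =>
    if m < k then 0 else φ (MvPolynomial.X (ℓ, ℓ, m)) - PowerSeries.coeff m B) with hEdef
  set E' := PowerSeries.mk (fun m =>
    φ (MvPolynomial.X (ℓ, ℓ, m)) - PowerSeries.coeff m B) with hE'def
  have hmapA : ∀ i ∈ univ.erase ℓ, (Aser K n i).map ψ = (Aser K n i).map φ := by
    intro i hi
    have hiℓ : i ≠ ℓ := (Finset.mem_erase.mp hi).1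
    ext m
    simp only [PowerSeries.coeff_map, Aser, PowerSeries.coeff_mk, hψX, hvdef]
    rw [if_neg]
    exact fun h => hiℓ h.1
  have hmapAℓψ : (Aser K n ℓ).map ψ = B + E := by
    ext m
    simp only [PowerSeries.coeff_map, Aser, PowerSeries.coeff_mk, hψX, hvdef, map_add,
      hEdef]
    by_cases hm : m < k <;> simp [hm]
  have hmapAℓφ : (Aser K n ℓ).map φ = B + E' := by
    ext m
    simp only [PowerSeries.coeff_map, Aser, PowerSeries.coeff_mk, map_add, hE'def]
    ring
  have hcomp : ∀ (W : MvPolynomial (Fin n × Fin n × ℕ) K →+* Localization.Away c)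
      (Eε : PowerSeries (Localization.Away c)),
      (Aser K n ℓ).map W = B + Eε →
      (∀ i ∈ univ.erase ℓ, (Aser K n i).map W = (Aser K n i).map φ) →
      ∀ j, W (fp K n j) = PowerSeries.coeff j (Eε * P) := by
    intro W Eε hW1 hW2 j
    rw [fp_eq, map_sub, apply_ite W, map_one, map_zero]
    rw [show W ((PowerSeries.coeff j) (∏ i, Aser K n i))
        = PowerSeries.coeff j ((∏ i, Aser K n i).map W) from
      (PowerSeries.coeff_map _ _ _).symm]
    rw [map_prod (PowerSeries.map W)]
    rw [← Finset.mul_prod_erase univ _ (Finset.mem_univ ℓ)]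
    rw [hW1, Finset.prod_congr rfl hW2, ← hPdef]
    rw [add_mul, map_add, mul_comm B P, hPB, PowerSeries.coeff_one]
    ring
  have hψfp : ∀ j, ψ (fp K n j) = PowerSeries.coeff j (E * P) :=
    hcomp ψ E hmapAℓψ hmapA
  have hφfp : ∀ j, φ (fp K n j) = PowerSeries.coeff j (E' * P) :=
    hcomp φ E' hmapAℓφ (fun _ _ => rfl)
  have hEcoeff : ∀ p, p < k → PowerSeries.coeff p E = 0 := by
    intro p hp
    simp [hEdef, hp]
  have hψfp0 : ∀ j, j < k → ψ (fp K n j) = 0 := by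
    intro j hj
    rw [hψfp, PowerSeries.coeff_mul]
    apply Finset.sum_eq_zero
    rintro ⟨p, q⟩ hpq
    rw [Finset.HasAntidiagonal.mem_antidiagonal] at hpq
    rw [hEcoeff p (lt_of_le_of_lt (Nat.le.intro hpq) hj), zero_mul]
  have hψfpk : ψ (fp K n k) =
      (φ (MvPolynomial.X (ℓ, ℓ, k)) - PowerSeries.coeff k B) * φ c := by
    rw [hψfp, PowerSeries.coeff_mul]
    rw [Finset.sum_eq_single (k, 0)]
    · rw [PowerSeries.coeff_zero_eq_constantCoeff_apply, hP0]
      simp [hEdef]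
    · rintro ⟨p, q⟩ hpq hne
      rw [Finset.HasAntidiagonal.mem_antidiagonal] at hpq
      have hp : p < k := by
        rcases Nat.lt_or_ge p k with h | h
        · exact h
        · exfalso; apply hne
          have : p = k := le_antisymm (Nat.le.intro hpq) h
          subst this
          simp at hpq
          simp [hpq]
      rw [hEcoeff p hp, zero_mul]
    · intro h
      exact absurd (Finset.HasAntidiagonal.mem_antidiagonal.mpr (by simp)) h
  -- each generator X (ℓ,ℓ,m) - h m lies in the pushed-forward ideal
  have gdiff : ∀ m, m < k →
      φ (MvPolynomial.X (ℓ, ℓ, m)) - PowerSeries.coeff m B ∈ Ideal.map φ Ik := by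
    intro m
    induction m using Nat.strong_induction_on with
    | _ m IH =>
      intro hm
      have h1 : φ (fp K n m) ∈ Ideal.map φ Ik :=
        Ideal.mem_map_of_mem _ (Ideal.subset_span ⟨m, hm, rfl⟩)
      rw [hφfp, PowerSeries.coeff_mul] at h1
      have hmem : ((m, 0) : ℕ × ℕ) ∈ antidiagonal m := Finset.HasAntidiagonal.mem_antidiagonal.mpr (by simp)
      rw [← Finset.add_sum_erase _ _ hmem] at h1
      have h3 : ∑ p ∈ (antidiagonal m).erase (m, 0),
          PowerSeries.coeff p.1 E' * PowerSeries.coeff p.2 P ∈ Ideal.map φ Ik := by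
        apply Ideal.sum_mem
        rintro ⟨p, q⟩ hpq
        rw [Finset.mem_erase, Finset.HasAntidiagonal.mem_antidiagonal] at hpq
        have hp : p < m := by
          rcases Nat.lt_or_ge p m with h | h
          · exact h
          · exfalso
            apply hpq.1
            have hpm : p = m := le_antisymm (Nat.le.intro hpq.2) h
            subst hpm
            have : q = 0 := by omega
            simp [this]
        have := IH p hp (hp.trans hm)
        have heq : PowerSeries.coeff (p, q).1 E'
            = φ (MvPolynomial.X (ℓ, ℓ, p)) - PowerSeries.coeff p B := by
          simp [hE'def]
        rw [heq]
        exact Ideal.mul_mem_right _ _ this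
      have h2 : (φ (MvPolynomial.X (ℓ, ℓ, m)) - PowerSeries.coeff m B) * φ c
          ∈ Ideal.map φ Ik := by
        have heq : PowerSeries.coeff ((m, 0) : ℕ × ℕ).1 E'
              * PowerSeries.coeff ((m, 0) : ℕ × ℕ).2 P
            = (φ (MvPolynomial.X (ℓ, ℓ, m)) - PowerSeries.coeff m B) * φ c := by
          rw [show ((m, 0) : ℕ × ℕ).2 = 0 from rfl,
            PowerSeries.coeff_zero_eq_constantCoeff_apply, hP0]
          simp [hE'def]
        rw [← heq]
        have := Ideal.sub_mem _ h1 h3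
        simpa using this
      have h4 := Ideal.mul_mem_right (↑hUc.unit⁻¹) _ h2
      have h5 : φ c * ↑hUc.unit⁻¹ = 1 := hUc.mul_val_inv
      rwa [mul_assoc, h5, mul_one] at h4
  -- φ and ψ agree modulo (map φ Ik)
  have compat : ∀ b, Ideal.Quotient.mk (Ideal.map φ Ik) (φ b)
      = Ideal.Quotient.mk (Ideal.map φ Ik) (ψ b) := by
    have hhom : (Ideal.Quotient.mk (Ideal.map φ Ik)).comp φ
        = (Ideal.Quotient.mk (Ideal.map φ Ik)).comp ψ := by
      apply MvPolynomial.ringHom_ext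
      · intro r
        simp only [RingHom.comp_apply, hψdef]
        rw [eval₂Hom_C]
        rfl
      · intro s
        simp only [RingHom.comp_apply, hψX]
        by_cases hs : s.1 = ℓ ∧ s.2.1 = ℓ ∧ s.2.2 < k
        · rw [hvdef]
          simp only [if_pos hs]
          refine (Ideal.Quotient.mk_eq_mk_iff_sub_mem _ _).mpr ?_
          have hseq : s = (ℓ, ℓ, s.2.2) :=
            Prod.ext hs.1 (Prod.ext hs.2.1 rfl)
          rw [hseq]
          exact gdiff _ hs.2.2
        · rw [hvdef]
          simp only [if_neg hs]
    exact fun b => RingHom.congr_fun hhom b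
  clear hvdef hψdef hEdef hE'def hmapA hmapAℓψ hmapAℓφ hcomp hψfp hφfp hEcoeff hψX
  clear_value v ψ E E'
  clear v E'
  -- the evaluation map detecting nonvanishing of ψ (fp k)
  set w : Fin n × Fin n × ℕ → Polynomial K := fun s =>
    if s = (ℓ, ℓ, k) then Polynomial.X else if s.2.2 = 0 then 1 else 0 with hwdef
  set e₀ : MvPolynomial (Fin n × Fin n × ℕ) K →+* Polynomial K :=
    eval₂Hom Polynomial.C w with he₀def
  have he₀X : ∀ s, e₀ (MvPolynomial.X s) = w s := fun s => eval₂Hom_X' _ _ _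
  have he₀c : e₀ c = 1 := by
    have h2 : e₀ c = ∏ i ∈ univ.erase ℓ, e₀ (MvPolynomial.X (i, i, (0:ℕ))) := map_prod e₀ _ _
    rw [h2]
    apply Finset.prod_eq_one
    intro i hi
    have hne : ((i, i, (0:ℕ)) : Fin n × Fin n × ℕ) ≠ (ℓ, ℓ, k) := by
      intro h
      have := congrArg (fun s => s.2.2) h
      simp at this
      omega
    rw [he₀X, hwdef]
    simp [hne]
  have hwX : w (ℓ, ℓ, k) = Polynomial.X := by
    rw [hwdef]
    simp
  clear he₀def
  clear_value e₀
  set e : Localization.Away c →+* Polynomial K :=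
    IsLocalization.Away.lift c (g := e₀) (by rw [he₀c]; exact isUnit_one) with hedef
  have heφ : ∀ b, e (φ b) = e₀ b := fun b => IsLocalization.Away.lift_eq c _ b
  clear hedef
  clear_value e
  have hmapP : P.map e = 1 := by
    have h1 : P.map e = ∏ i ∈ univ.erase ℓ, ((Aser K n i).map φ).map e :=
      map_prod (PowerSeries.map e) _ _
    rw [h1]
    apply Finset.prod_eq_one
    intro i hi
    have hiℓ : i ≠ ℓ := (Finset.mem_erase.mp hi).1
    ext m
    rw [PowerSeries.coeff_map, PowerSeries.coeff_map]
    have : PowerSeries.coeff m (Aser K n i) = MvPolynomial.X (i, i, m) := by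
      simp [Aser]
    rw [this, heφ, he₀X, hwdef, PowerSeries.coeff_one]
    have hne : ((i, i, m) : Fin n × Fin n × ℕ) ≠ (ℓ, ℓ, k) := by
      intro h
      exact hiℓ (congrArg Prod.fst h)
    simp [hne]
  have hmapB : B.map e = 1 := by
    have h1 := congrArg (PowerSeries.map e) hPB
    rw [map_mul, hmapP, one_mul, map_one] at h1
    exact h1
  have hehk : e (PowerSeries.coeff k B) = 0 := by
    have h1 := congrArg (PowerSeries.coeff k) hmapB
    rw [PowerSeries.coeff_map, PowerSeries.coeff_one, if_neg hk.ne'] at h1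
    exact h1
  have hne0 : ψ (fp K n k) ≠ 0 := by
    rw [hψfpk]
    intro h0
    have h1 := congrArg e h0
    rw [e.map_mul, e.map_sub, e.map_zero, heφ, heφ, hehk, he₀c, mul_one, sub_zero,
      he₀X, hwX] at h1
    exact Polynomial.X_ne_zero h1
  -- ψ kills fp k * a, hence ψ a = 0
  have hψmul : ψ (fp K n k) * ψ a = 0 := by
    rw [← ψ.map_mul]
    have h1 : ψ (fp K n k * a) ∈ Ideal.map ψ Ik := Ideal.mem_map_of_mem _ ha
    rw [hIkdef, Ideal.map_span] at h1
    have hle : Ideal.span (ψ '' (fp K n '' {j | j < k})) ≤ ⊥ := by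
      rw [Ideal.span_le]
      rintro y ⟨z, ⟨j, hj, rfl⟩, rfl⟩
      simp only [SetLike.mem_coe, Ideal.mem_bot]
      exact hψfp0 j hj
    simpa using hle h1
  have hψa0 : ψ a = 0 := by
    rcases mul_eq_zero.mp hψmul with h | h
    · exact absurd h hne0
    · exact h
  -- hence φ a lies in the pushed ideal
  have hφaI : φ a ∈ Ideal.map φ Ik := by
    have h1 := compat a
    rw [hψa0, (Ideal.Quotient.mk (Ideal.map φ Ik)).map_zero] at h1
    exact (Ideal.Quotient.eq_zero_iff_mem).mp h1
  -- pull back: some power of c times a lies in Ik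
  obtain ⟨⟨b, s⟩, hbs⟩ :=
    (IsLocalization.mem_map_algebraMap_iff (Submonoid.powers c)
      (Localization.Away c)).mp hφaI
  obtain ⟨m, hm⟩ := s.2
  have hacm : a * c ^ m ∈ Ik := by
    have h1 : φ (a * (s : MvPolynomial (Fin n × Fin n × ℕ) K)) = φ (b : _) := by
      rw [φ.map_mul]; exact hbs
    have h2 : a * (s : MvPolynomial (Fin n × Fin n × ℕ) K) = b := hφinj h1
    have hm' : c ^ m = (s : MvPolynomial (Fin n × Fin n × ℕ) K) := by simpa using hm
    rw [hm', h2]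
    exact b.2
  -- c is invertible modulo Ik, so a ∈ Ik
  have hf0 : fp K n 0 ∈ Ik := Ideal.subset_span ⟨0, hk, rfl⟩
  have hf0eq : fp K n 0 = c * MvPolynomial.X (ℓ, ℓ, (0:ℕ)) - 1 := by
    rw [fp, Finset.Nat.antidiagonalTuple_zero_right, Finset.sum_singleton, if_pos rfl]
    simp only [Pi.zero_apply]
    congr 1
    rw [mul_comm]
    exact (Finset.mul_prod_erase univ _ (Finset.mem_univ ℓ)).symm
  have hQ1 : Ideal.Quotient.mk Ik (c * MvPolynomial.X (ℓ, ℓ, (0:ℕ))) = 1 := by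
    have h1 := (Ideal.Quotient.eq_zero_iff_mem).mpr hf0
    rw [hf0eq, (Ideal.Quotient.mk Ik).map_sub, (Ideal.Quotient.mk Ik).map_one,
      sub_eq_zero] at h1
    exact h1
  rw [← Ideal.Quotient.eq_zero_iff_mem]
  have hfin : Ideal.Quotient.mk Ik a
      * (Ideal.Quotient.mk Ik (c * MvPolynomial.X (ℓ, ℓ, (0:ℕ)))) ^ m = 0 := by
    rw [← (Ideal.Quotient.mk Ik).map_pow, ← (Ideal.Quotient.mk Ik).map_mul]
    rw [show a * (c * MvPolynomial.X (ℓ, ℓ, (0:ℕ))) ^ m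
        = a * c ^ m * MvPolynomial.X (ℓ, ℓ, (0:ℕ)) ^ m by ring]
    rw [Ideal.Quotient.eq_zero_iff_mem]
    exact Ideal.mul_mem_right _ _ hacm
  rwa [hQ1, one_pow, mul_one] at hfin

theorem final (hn : 0 < n) (k : ℕ) (a : MvPolynomial (Fin n × Fin n × ℕ) K)
    (ha : fp K n k * a ∈ Ideal.span (fp K n '' {j | j < k})) :
    a ∈ Ideal.span (fp K n '' {j | j < k}) := by
  rcases Nat.eq_zero_or_pos k with hk | hk
  · subst hk
    have hempty : (fp K n '' {j | j < 0}) = ∅ := by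
      have : {j : ℕ | j < 0} = ∅ := by ext j; simp
      rw [this, Set.image_empty]
    rw [hempty, Ideal.span_empty] at ha ⊢
    have h0 : fp K n 0 * a = 0 := Ideal.mem_bot.mp ha
    have hf0 : fp K n 0 ≠ 0 := by
      have heq : fp K n 0 = (∏ i : Fin n, MvPolynomial.X (i, i, (0:ℕ))) - 1 := by
        rw [fp, Finset.Nat.antidiagonalTuple_zero_right, Finset.sum_singleton, if_pos rfl]
        simp only [Pi.zero_apply]
      have hzero : (MvPolynomial.eval (fun _ : Fin n × Fin n × ℕ => (0:K)))
          (∏ i : Fin n, MvPolynomial.X (i, i, (0:ℕ))) = 0 := by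
        rw [map_prod]
        apply Finset.prod_eq_zero (Finset.mem_univ (⟨0, hn⟩ : Fin n))
        simp
      intro h
      have h1 := congrArg (MvPolynomial.eval (fun _ : Fin n × Fin n × ℕ => (0:K))) h
      rw [heq, map_sub, map_one, map_zero, hzero, zero_sub, neg_eq_zero] at h1
      exact one_ne_zero h1
    rcases mul_eq_zero.mp h0 with h | h
    · exact absurd h hf0
    · exact Ideal.mem_bot.mpr h
  · exact aux K n hn k hk a ha

end Stmt6

theorem stmt6 (K : Type*) [Field K] [CharZero K] (n : ℕ) (hn : 0 < n) :
    let R := MvPolynomial (Fin n × Fin n × ℕ) K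
    let f : ℕ → R := fun k =>
      (∑ c ∈ Finset.Nat.antidiagonalTuple n k,
        ∏ i : Fin n, MvPolynomial.X (i, i, c i)) - (if k = 0 then 1 else 0)
    ∀ k : ℕ, ∀ x : R ⧸ Ideal.span (f '' {j | j < k}),
      Ideal.Quotient.mk (Ideal.span (f '' {j | j < k})) (f k) * x = 0 → x = 0 := by
  intro R f k x hx
  have hf : f = Stmt6.fp K n := rfl
  obtain ⟨a, rfl⟩ := Ideal.Quotient.mk_surjective x
  rw [← map_mul, Ideal.Quotient.eq_zero_iff_mem] at hx
  rw [Ideal.Quotient.eq_zero_iff_mem]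
  rw [hf] at hx ⊢
  exact Stmt6.final K n hn k a hx
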